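/- Let X be a compact metric space on which a countable group Γ acts by homeomorphisms, and let Γ act on a standard probability space (Y, ν) preserving ν. Then the set of Γ-invariant Borel probability measures ω on X such that the action Γ ↷ (X, ω) is weakly contained in Γ ↷ (Y, ν) is closed in the weak* topology on the space of invariant measures. -/

import Mathlib

open MeasureTheory
open scoped BigOperators ENNReal NNReal

section helper
variable {α : Type*} [TopologicalSpace α] [MeasurableSpace α] (μ : Measure α)

lemma nullFrontier_union {s t : Set α} (hs : μ (frontier s) = 0) (ht : μ (frontier t) = 0) :
    μ (frontier (s ∪ t)) = 0 :=
  measure_mono_null ((frontier_union_subset s t).trans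
    (Set.union_subset_union Set.inter_subset_left Set.inter_subset_right))
    (measure_union_null hs ht)

lemma nullFrontier_inter {s t : Set α} (hs : μ (frontier s) = 0) (ht : μ (frontier t) = 0) :
    μ (frontier (s ∩ t)) = 0 :=
  measure_mono_null ((frontier_inter_subset s t).trans
    (Set.union_subset_union Set.inter_subset_left Set.inter_subset_right))
    (measure_union_null hs ht)

lemma nullFrontier_compl {s : Set α} (hs : μ (frontier s) = 0) :
    μ (frontier sᶜ) = 0 := by rwa [frontier_compl]

lemma nullFrontier_biUnion {ι : Type*} (t : Finset ι) {s : ι → Set α}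
    (hs : ∀ i, μ (frontier (s i)) = 0) : μ (frontier (⋃ i ∈ t, s i)) = 0 := by
  classical
  induction t using Finset.induction with
  | empty => simp
  | insert _ _ h ih =>
      rw [Finset.set_biUnion_insert]
      exact nullFrontier_union μ (hs _) ih

lemma nullFrontier_iUnion {ι : Type*} [Fintype ι] {s : ι → Set α}
    (hs : ∀ i, μ (frontier (s i)) = 0) : μ (frontier (⋃ i, s i)) = 0 := by
  have h := nullFrontier_biUnion μ (Finset.univ : Finset ι) hs
  simpa using h

lemma nullFrontier_iInter {ι : Type*} [Fintype ι] {s : ι → Set α}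
    (hs : ∀ i, μ (frontier (s i)) = 0) : μ (frontier (⋂ i, s i)) = 0 := by
  have h : (⋂ i, s i) = (⋃ i, (s i)ᶜ)ᶜ := by simp
  rw [h]
  exact nullFrontier_compl μ (nullFrontier_iUnion μ fun i => nullFrontier_compl μ (hs i))

end helper

/-- `Γ ↷ (Y, ν)` weakly contains `Γ ↷ (Z, ζ)`: every finite observable of `Z`
can be simulated in `Y` up to `ε` in the `ℓ¹`-distance of finite-window
distributions. -/
def WeaklyContainedIn {Γ Z Y : Type*} [Group Γ] [DecidableEq Γ]
    [MeasurableSpace Z] [MeasurableSpace Y] [MulAction Γ Z] [MulAction Γ Y]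
    (ζ : Measure Z) (ν : Measure Y) : Prop :=
  ∀ (n : ℕ) (ψ : Z → Fin n), Measurable ψ →
    ∀ (W : Finset Γ) (ε : ℝ), 0 < ε →
      ∃ φ : Y → Fin n, Measurable φ ∧
        ∑ j : (W → Fin n),
          |(ν {y | ∀ w : W, φ ((w : Γ) • y) = j w}).toReal -
              (ζ {z | ∀ w : W, ψ ((w : Γ) • z) = j w}).toReal| ≤ ε

lemma arith_third (ε : ℝ) (hε : 0 < ε) (n c : ℕ) :
    2 * ((c : ℝ) * (2 * n * (ε / (16 * ((n : ℝ) + 1) * ((c : ℝ) + 1))))) ≤ ε / 4 := by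
  have hb1 : (0 : ℝ) < (n : ℝ) + 1 := by positivity
  have hb2 : (0 : ℝ) < (c : ℝ) + 1 := by positivity
  have hδpos : 0 < ε / (16 * ((n : ℝ) + 1) * ((c : ℝ) + 1)) := by positivity
  have hmono : 2 * ((c : ℝ) * (2 * n * (ε / (16 * ((n : ℝ) + 1) * ((c : ℝ) + 1))))) ≤
      4 * ((n : ℝ) + 1) * ((c : ℝ) + 1) * (ε / (16 * ((n : ℝ) + 1) * ((c : ℝ) + 1))) := by
    nlinarith [hδpos.le, Nat.cast_nonneg (α := ℝ) n, Nat.cast_nonneg (α := ℝ) c]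
  have heq : 4 * ((n : ℝ) + 1) * ((c : ℝ) + 1) * (ε / (16 * ((n : ℝ) + 1) * ((c : ℝ) + 1))) =
      ε / 4 := by
    field_simp
    ring
  linarith

lemma arith_second (ε : ℝ) (m : ℕ) (hm : 0 < m) : (m : ℝ) * (ε / (4 * m)) = ε / 4 := by
  have hm0 : (m : ℝ) ≠ 0 := Nat.cast_ne_zero.mpr hm.ne'
  field_simp


set_option maxHeartbeats 2000000 in
/-- If a countable group `Γ` acts by homeomorphisms on a compact metric space `X`
and acts measure-preservingly on a standard probability space `(Y, ν)`, then the
set of `Γ`-invariant Borel probability measures `ω` on `X` for which `Γ ↷ (X, ω)`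
is weakly contained in `Γ ↷ (Y, ν)` is weak*-closed. -/
theorem stmt9 {Γ X Y : Type*} [Group Γ] [Countable Γ] [DecidableEq Γ]
    [MetricSpace X] [CompactSpace X] [MeasurableSpace X] [BorelSpace X]
    [MulAction Γ X] (hcont : ∀ γ : Γ, Continuous fun x : X => γ • x)
    [MeasurableSpace Y] [MulAction Γ Y]
    (ν : Measure Y) [IsProbabilityMeasure ν]
    (hν : ∀ γ : Γ, MeasurePreserving (fun y : Y => γ • y) ν ν) :
    IsClosed {ω : ProbabilityMeasure X |
      (∀ γ : Γ, (ω : Measure X).map (fun x => γ • x) = ω) ∧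
      WeaklyContainedIn (Γ := Γ) (ω : Measure X) ν} := by
  classical
  set S := {ω : ProbabilityMeasure X |
      (∀ γ : Γ, (ω : Measure X).map (fun x => γ • x) = ω) ∧
      WeaklyContainedIn (Γ := Γ) (ω : Measure X) ν} with hSdef
  refine isClosed_of_closure_subset ?_
  intro ω hω
  -- Step 1: invariance of the limit measure
  have hinv : ∀ γ : Γ, (ω : Measure X).map (fun x => γ • x) = (ω : Measure X) := by
    intro γ
    have hcl : IsClosed {ω'' : ProbabilityMeasure X |
        ProbabilityMeasure.map ω'' (hcont γ).measurable.aemeasurable = ω''} :=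
      isClosed_eq (ProbabilityMeasure.continuous_map (hcont γ)) continuous_id
    have hsub : S ⊆ {ω'' : ProbabilityMeasure X |
        ProbabilityMeasure.map ω'' (hcont γ).measurable.aemeasurable = ω''} := by
      intro ω'' hmem
      have h1 := hmem.1 γ
      apply ProbabilityMeasure.toMeasure_injective
      rw [ProbabilityMeasure.toMeasure_map]
      exact h1
    have hmem := closure_minimal hsub hcl hω
    have h2 := congrArg (fun p : ProbabilityMeasure X => (p : Measure X)) hmem
    simpa [ProbabilityMeasure.toMeasure_map] using h2
  have hinvset : ∀ (γ : Γ) (s : Set X), MeasurableSet s →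
      (ω : Measure X) ((fun x => γ • x) ⁻¹' s) = (ω : Measure X) s := by
    intro γ s hs
    conv_rhs => rw [← hinv γ]
    rw [Measure.map_apply (hcont γ).measurable hs]
  refine ⟨hinv, ?_⟩
  intro n ψ hψ W ε hε
  -- X is nonempty since it carries a probability measure
  have hXne : Nonempty X := by
    by_contra h
    have h0 : (ω : Measure X) Set.univ = 1 := measure_univ
    rw [Set.univ_eq_empty_iff.mpr (not_nonempty_iff.mp h), measure_empty] at h0
    exact zero_ne_one h0
  obtain ⟨x₀⟩ := hXne
  have hn0 : 0 < n := (ψ x₀).pos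
  haveI : Nonempty (Fin n) := ⟨ψ x₀⟩
  set i₀ : Fin n := ψ x₀ with hi₀
  set m : ℕ := Fintype.card (W → Fin n) with hm
  have hmpos : 0 < m := Fintype.card_pos
  set δ : ℝ := ε / (16 * (n + 1) * (W.card + 1)) with hδ
  have hδpos : 0 < δ := by positivity
  set η : ℝ≥0∞ := ENNReal.ofReal δ with hηdef
  have hη0 : η ≠ 0 := by
    simp only [hηdef, ne_eq, ENNReal.ofReal_eq_zero, not_le]
    exact hδpos
  set δ₂ : ℝ := ε / (4 * m) with hδ₂
  have hδ₂pos : 0 < δ₂ := by positivity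
  -- approximate the fibers of ψ from inside by closed sets
  set A : Fin n → Set X := fun i => ψ ⁻¹' {i} with hA
  have hAmeas : ∀ i, MeasurableSet (A i) := fun i => hψ (measurableSet_singleton i)
  have hC : ∀ i, ∃ C, C ⊆ A i ∧ IsClosed C ∧ (ω : Measure X) (A i \ C) < η :=
    fun i => (hAmeas i).exists_isClosed_diff_lt (measure_ne_top _ _) hη0
  choose C hCA hCcl hCη using hC
  -- thickenings with null frontier and small excess
  have hU : ∀ i, ∃ r : ℝ, 0 < r ∧
      (ω : Measure X) (frontier (Metric.thickening r (C i))) = 0 ∧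
      (ω : Measure X) (Metric.thickening r (C i)) ≤ (ω : Measure X) (C i) + η := by
    intro i
    have htend := tendsto_measure_thickening_of_isClosed
      (μ := (ω : Measure X)) ⟨1, one_pos, measure_ne_top _ _⟩ (hCcl i)
    have hlt : (ω : Measure X) (C i) < (ω : Measure X) (C i) + η :=
      ENNReal.lt_add_right (measure_ne_top _ _) hη0
    have hev : ∀ᶠ r in nhdsWithin 0 (Set.Ioi 0),
        (ω : Measure X) (Metric.thickening r (C i)) < (ω : Measure X) (C i) + η :=
      htend.eventually_lt_const hlt
    obtain ⟨u, hu, hsubu⟩ := mem_nhdsGT_iff_exists_Ioo_subset.mp hev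
    obtain ⟨r, hrIoo, hrnull⟩ :=
      exists_null_frontier_thickening (ω : Measure X) (C i) (hu : (0:ℝ) < u)
    exact ⟨r, hrIoo.1, hrnull, (hsubu ⟨hrIoo.1, hrIoo.2⟩).le⟩
  choose r hrpos hUnull hUle using hU
  set U : Fin n → Set X := fun i => Metric.thickening (r i) (C i) with hUdef
  have hUopen : ∀ i, IsOpen (U i) := fun i => Metric.isOpen_thickening
  have hCU : ∀ i, C i ⊆ U i := fun i => Metric.self_subset_thickening (hrpos i) _
  have hUC : ∀ i, (ω : Measure X) (U i \ C i) ≤ η := by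
    intro i
    rw [measure_diff (hCU i) (hCcl i).measurableSet.nullMeasurableSet (measure_ne_top _ _)]
    refine tsub_le_iff_right.mpr ?_
    rw [add_comm]
    exact hUle i
  -- the approximating observable ψ'
  set T : X → Finset (Fin n) := fun x => Finset.univ.filter (fun j => x ∈ U j) with hT
  set ψ' : X → Fin n := fun x => if h : (T x).Nonempty then (T x).min' h else i₀ with hψ'
  set F : Fin n → Set X := fun i => ψ' ⁻¹' {i} with hF
  have hTmem : ∀ x j, j ∈ T x ↔ x ∈ U j := by
    intro x j; simp [hT]
  have hFib : ∀ i, F i =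
      ((U i \ ⋃ j ∈ Finset.Iio i, U j) ∪ (if i = i₀ then (⋃ j, U j)ᶜ else ∅)) := by
    intro i
    ext x
    simp only [hF, Set.mem_preimage, Set.mem_singleton_iff]
    constructor
    · intro hx
      by_cases h : (T x).Nonempty
      · left
        have hmin : (T x).min' h = i := by
          rw [hψ'] at hx; simpa [dif_pos h] using hx
        have hiT : i ∈ T x := hmin ▸ (T x).min'_mem h
        refine ⟨(hTmem x i).mp hiT, ?_⟩
        intro hmem
        rw [Set.mem_iUnion₂] at hmem
        obtain ⟨j, hj, hxj⟩ := hmem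
        have hjT : j ∈ T x := (hTmem x j).mpr hxj
        have := (T x).min'_le j hjT
        rw [hmin] at this
        exact absurd (Finset.mem_Iio.mp hj) (not_lt.mpr this)
      · right
        have hii : i = i₀ := by
          rw [hψ'] at hx; simp [dif_neg h] at hx; exact hx.symm
        rw [if_pos hii]
        intro hmem
        rw [Set.mem_iUnion] at hmem
        obtain ⟨j, hxj⟩ := hmem
        exact h ⟨j, (hTmem x j).mpr hxj⟩
    · intro hx
      rcases hx with ⟨hxU, hxlow⟩ | hx
      · have hiT : i ∈ T x := (hTmem x i).mpr hxU
        have h : (T x).Nonempty := ⟨i, hiT⟩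
        have hle := (T x).min'_le i hiT
        have hxm : x ∈ U ((T x).min' h) := (hTmem x _).mp ((T x).min'_mem h)
        have heq : (T x).min' h = i := by
          rcases lt_or_eq_of_le hle with hlt | heq
          · exact absurd (Set.mem_biUnion (Finset.mem_Iio.mpr hlt) hxm) hxlow
          · exact heq.symm ▸ rfl
        rw [hψ']; simp only [dif_pos h]; exact heq
      · by_cases hii : i = i₀
        · rw [if_pos hii] at hx
          have h : ¬ (T x).Nonempty := by
            intro hne
            obtain ⟨j, hj⟩ := hne
            exact hx (Set.mem_iUnion.mpr ⟨j, (hTmem x j).mp hj⟩)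
          rw [hψ']; simp only [dif_neg h]; exact hii.symm
        · rw [if_neg hii] at hx
          exact absurd hx (Set.notMem_empty x)
  have hFmeas : ∀ i, MeasurableSet (F i) := by
    intro i
    rw [hFib i]
    refine MeasurableSet.union ?_ ?_
    · exact (hUopen i).measurableSet.diff
        (MeasurableSet.biUnion (Finset.Iio i).countable_toSet fun j _ => (hUopen j).measurableSet)
    · split
      · exact (MeasurableSet.iUnion fun j => (hUopen j).measurableSet).compl
      · exact MeasurableSet.empty
  have hψ'meas : Measurable ψ' := measurable_to_countable' fun i => hFmeas i
  have hFnull : ∀ i, (ω : Measure X) (frontier (F i)) = 0 := by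
    intro i
    rw [hFib i]
    refine nullFrontier_union _ ?_ ?_
    · rw [Set.diff_eq]
      refine nullFrontier_inter _ (hUnull i) (nullFrontier_compl _ ?_)
      exact nullFrontier_biUnion _ _ fun j => hUnull j
    · split
      · exact nullFrontier_compl _ (nullFrontier_iUnion _ fun j => hUnull j)
      · simp
  -- the discrepancy set
  set D : Set X := {x | ψ x ≠ ψ' x} with hD
  have hDeq : D = ⋃ i, (A i \ F i) := by
    ext x
    simp only [hD, Set.mem_setOf_eq, Set.mem_iUnion, Set.mem_diff, hA, hF,
      Set.mem_preimage, Set.mem_singleton_iff]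
    constructor
    · intro hne; exact ⟨ψ x, rfl, fun hc => hne hc.symm⟩
    · rintro ⟨i, hi, hi'⟩ hc; exact hi' (by rw [← hc, hi])
  have hDmeas : MeasurableSet D := by
    rw [hDeq]; exact MeasurableSet.iUnion fun i => (hAmeas i).diff (hFmeas i)
  have hDsub : D ⊆ ⋃ i, ((A i \ C i) ∪ (U i \ C i)) := by
    intro x hx
    by_contra hxn
    simp only [Set.mem_iUnion, Set.mem_union, not_exists, not_or] at hxn
    have hxA : x ∈ A (ψ x) := by simp [hA]
    have hxC : x ∈ C (ψ x) := by
      by_contra hc; exact (hxn (ψ x)).1 ⟨hxA, hc⟩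
    have hxU : x ∈ U (ψ x) := hCU _ hxC
    have hTne : (T x).Nonempty := ⟨ψ x, (hTmem x _).mpr hxU⟩
    have hxUm : x ∈ U ((T x).min' hTne) := (hTmem x _).mp ((T x).min'_mem hTne)
    have hxCm : x ∈ C ((T x).min' hTne) := by
      by_contra hc; exact (hxn _).2 ⟨hxUm, hc⟩
    have hxAm : x ∈ A ((T x).min' hTne) := hCA _ hxCm
    have hψm : ψ x = (T x).min' hTne := by
      simpa [hA] using hxAm
    have : ψ' x = ψ x := by
      rw [hψ']; simp only [dif_pos hTne]; exact hψm.symm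
    exact hx this.symm
  have hDbound : (ω : Measure X) D ≤ (2 * n) * η := by
    calc (ω : Measure X) D ≤ (ω : Measure X) (⋃ i, ((A i \ C i) ∪ (U i \ C i))) :=
          measure_mono hDsub
      _ ≤ ∑' i : Fin n, (ω : Measure X) ((A i \ C i) ∪ (U i \ C i)) := measure_iUnion_le _
      _ = ∑ i : Fin n, (ω : Measure X) ((A i \ C i) ∪ (U i \ C i)) := tsum_fintype _
      _ ≤ ∑ _i : Fin n, (η + η) := by
          refine Finset.sum_le_sum fun i _ => ?_
          exact (measure_union_le _ _).trans (add_le_add (hCη i).le (hUC i))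
      _ = (2 * n) * η := by
          rw [Finset.sum_const, Finset.card_univ, Fintype.card_fin]
          rw [two_mul, add_mul, nsmul_eq_mul, mul_add]
  -- window sets
  set Aset : (W → Fin n) → Set X := fun j => {z : X | ∀ w : W, ψ ((w : Γ) • z) = j w}
    with hAset
  set Bset : (W → Fin n) → Set X := fun j => {z : X | ∀ w : W, ψ' ((w : Γ) • z) = j w}
    with hBset
  have hAset_eq : ∀ j, Aset j = ⋂ w : W, (fun x => (w : Γ) • x) ⁻¹' (ψ ⁻¹' {j w}) := by
    intro j; ext x; simp [hAset, Set.mem_iInter]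
  have hBset_eq : ∀ j, Bset j = ⋂ w : W, (fun x => (w : Γ) • x) ⁻¹' (ψ' ⁻¹' {j w}) := by
    intro j; ext x; simp [hBset, Set.mem_iInter]
  have hAsetmeas : ∀ j, MeasurableSet (Aset j) := by
    intro j
    rw [hAset_eq j]
    exact MeasurableSet.iInter fun w =>
      (hcont (w : Γ)).measurable (hψ (measurableSet_singleton _))
  have hBsetmeas : ∀ j, MeasurableSet (Bset j) := by
    intro j
    rw [hBset_eq j]
    exact MeasurableSet.iInter fun w =>
      (hcont (w : Γ)).measurable (hψ'meas (measurableSet_singleton _))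
  -- frontiers of window sets are null for ω
  have hpre : ∀ (γ : Γ) (s : Set X),
      frontier ((fun x => γ • x) ⁻¹' s) = (fun x => γ • x) ⁻¹' (frontier s) := by
    intro γ s
    let e : X ≃ₜ X :=
      { toFun := fun x => γ • x
        invFun := fun x => γ⁻¹ • x
        left_inv := fun x => inv_smul_smul γ x
        right_inv := fun x => smul_inv_smul γ x
        continuous_toFun := hcont γ
        continuous_invFun := hcont γ⁻¹ }
    exact (e.preimage_frontier s).symm
  have hBnull : ∀ j, (ω : Measure X) (frontier (Bset j)) = 0 := by
    intro j
    rw [hBset_eq j]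
    refine nullFrontier_iInter _ fun w => ?_
    rw [hpre (w : Γ) (ψ' ⁻¹' {j w}), hinvset _ _ isClosed_frontier.measurableSet]
    exact hFnull (j w)
  -- choose a measure in S close to ω on all window sets
  have hδ4 : 0 < ε / 4 := by linarith
  have htendB : ∀ j : W → Fin n, Filter.Tendsto
      (fun ω'' : ProbabilityMeasure X => ((ω'' : Measure X) (Bset j)).toReal) (nhds ω)
      (nhds (((ω : Measure X) (Bset j)).toReal)) := by
    intro j
    have h0 := ProbabilityMeasure.tendsto_measure_of_null_frontier_of_tendsto'
      (μ := ω) (μs := fun p : ProbabilityMeasure X => p) Filter.tendsto_id (hBnull j)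
    exact (ENNReal.tendsto_toReal (measure_ne_top _ _)).comp h0
  have hev : ∀ᶠ (ω'' : ProbabilityMeasure X) in nhds ω, ∀ j : W → Fin n,
      |((ω'' : Measure X) (Bset j)).toReal - ((ω : Measure X) (Bset j)).toReal| < δ₂ := by
    rw [Filter.eventually_all]
    intro j
    have h2 := Metric.tendsto_nhds.mp (htendB j) δ₂ hδ₂pos
    simpa [Real.dist_eq] using h2
  obtain ⟨ω', hω'mem⟩ := mem_closure_iff_nhds.mp hω _ hev
  have hω'nb : ∀ j : W → Fin n,
      |((ω' : Measure X) (Bset j)).toReal - ((ω : Measure X) (Bset j)).toReal| < δ₂ :=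
    hω'mem.1
  obtain ⟨hω'inv, hω'wc⟩ := hω'mem.2
  obtain ⟨φ, hφmeas, hφsum⟩ := hω'wc n ψ' hψ'meas W (ε / 4) hδ4
  have hφsum' : ∑ j : W → Fin n,
      |(ν {y | ∀ w : W, φ ((w : Γ) • y) = j w}).toReal -
        ((ω' : Measure X) (Bset j)).toReal| ≤ ε / 4 := hφsum
  -- third error term
  set DW : Set X := ⋃ w : W, (fun x => (w : Γ) • x) ⁻¹' D with hDW
  have hDWmeas : MeasurableSet DW :=
    MeasurableSet.iUnion fun w => (hcont (w : Γ)).measurable hDmeas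
  have hDWbound : (ω : Measure X) DW ≤ (W.card : ℝ≥0∞) * ((2 * n) * η) := by
    calc (ω : Measure X) DW ≤ ∑' w : W, (ω : Measure X) ((fun x => (w : Γ) • x) ⁻¹' D) :=
          measure_iUnion_le _
      _ = ∑ w : W, (ω : Measure X) ((fun x => (w : Γ) • x) ⁻¹' D) := tsum_fintype _
      _ = ∑ _w : W, (ω : Measure X) D :=
          Finset.sum_congr rfl fun w _ => hinvset _ _ hDmeas
      _ = (W.card : ℝ≥0∞) * (ω : Measure X) D := by
          rw [Finset.sum_const, Finset.card_univ, Fintype.card_coe, nsmul_eq_mul]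
      _ ≤ (W.card : ℝ≥0∞) * ((2 * n) * η) := mul_le_mul' le_rfl hDbound
  have hABsub : ∀ j : W → Fin n, (Aset j \ Bset j) ⊆ DW := by
    intro j x hx
    obtain ⟨hxA, hxB⟩ := hx
    have hxA' : ∀ w : W, ψ ((w : Γ) • x) = j w := hxA
    have hxB' : ¬ ∀ w : W, ψ' ((w : Γ) • x) = j w := hxB
    push_neg at hxB'
    obtain ⟨w, hw⟩ := hxB'
    exact Set.mem_iUnion.mpr ⟨w, fun hc => hw (by rw [← hc, hxA' w])⟩
  have hBAsub : ∀ j : W → Fin n, (Bset j \ Aset j) ⊆ DW := by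
    intro j x hx
    obtain ⟨hxB, hxA⟩ := hx
    have hxB' : ∀ w : W, ψ' ((w : Γ) • x) = j w := hxB
    have hxA' : ¬ ∀ w : W, ψ ((w : Γ) • x) = j w := hxA
    push_neg at hxA'
    obtain ⟨w, hw⟩ := hxA'
    refine Set.mem_iUnion.mpr ⟨w, ?_⟩
    show ψ ((w : Γ) • x) ≠ ψ' ((w : Γ) • x)
    rw [hxB' w]
    exact hw
  have hAdisj : Pairwise (Function.onFun Disjoint fun j => Aset j \ Bset j) := by
    intro j j' hne
    refine Set.disjoint_left.mpr fun x hx hx' => hne ?_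
    exact funext fun w => ((hx.1 : ∀ w : W, _) w).symm.trans ((hx'.1 : ∀ w : W, _) w)
  have hBdisj : Pairwise (Function.onFun Disjoint fun j => Bset j \ Aset j) := by
    intro j j' hne
    refine Set.disjoint_left.mpr fun x hx hx' => hne ?_
    exact funext fun w => ((hx.1 : ∀ w : W, _) w).symm.trans ((hx'.1 : ∀ w : W, _) w)
  have hsumAB : ∑ j : W → Fin n, (ω : Measure X) (Aset j \ Bset j) ≤ (ω : Measure X) DW := by
    rw [← tsum_fintype (L := SummationFilter.unconditional _), ← measure_iUnion hAdisj fun j => (hAsetmeas j).diff (hBsetmeas j)]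
    exact measure_mono (Set.iUnion_subset hABsub)
  have hsumBA : ∑ j : W → Fin n, (ω : Measure X) (Bset j \ Aset j) ≤ (ω : Measure X) DW := by
    rw [← tsum_fintype (L := SummationFilter.unconditional _), ← measure_iUnion hBdisj fun j => (hBsetmeas j).diff (hAsetmeas j)]
    exact measure_mono (Set.iUnion_subset hBAsub)
  have hthird : ∀ j : W → Fin n,
      |((ω : Measure X) (Bset j)).toReal - ((ω : Measure X) (Aset j)).toReal| ≤
        ((ω : Measure X) (Aset j \ Bset j)).toReal +
          ((ω : Measure X) (Bset j \ Aset j)).toReal := by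
    intro j
    have h1 : (ω : Measure X) (Bset j) ≤
        (ω : Measure X) (Aset j) + (ω : Measure X) (Bset j \ Aset j) := by
      refine (measure_mono ?_).trans (measure_union_le _ _)
      intro x hx
      by_cases hxA : x ∈ Aset j
      · exact Or.inl hxA
      · exact Or.inr ⟨hx, hxA⟩
    have h2 : (ω : Measure X) (Aset j) ≤
        (ω : Measure X) (Bset j) + (ω : Measure X) (Aset j \ Bset j) := by
      refine (measure_mono ?_).trans (measure_union_le _ _)
      intro x hx
      by_cases hxB : x ∈ Bset j
      · exact Or.inl hxB
      · exact Or.inr ⟨hx, hxB⟩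
    have h1' := ENNReal.toReal_mono
      (ENNReal.add_ne_top.mpr ⟨measure_ne_top _ _, measure_ne_top _ _⟩) h1
    have h2' := ENNReal.toReal_mono
      (ENNReal.add_ne_top.mpr ⟨measure_ne_top _ _, measure_ne_top _ _⟩) h2
    rw [ENNReal.toReal_add (measure_ne_top _ _) (measure_ne_top _ _)] at h1' h2'
    have hnn1 : 0 ≤ ((ω : Measure X) (Aset j \ Bset j)).toReal := ENNReal.toReal_nonneg
    have hnn2 : 0 ≤ ((ω : Measure X) (Bset j \ Aset j)).toReal := ENNReal.toReal_nonneg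
    rw [abs_sub_le_iff]
    constructor <;> linarith
  -- numeric bound for the third term
  have hDWreal : ((ω : Measure X) DW).toReal ≤ (W.card : ℝ) * (2 * n * δ) := by
    have hne : (W.card : ℝ≥0∞) * ((2 * n) * η) ≠ ⊤ :=
      ENNReal.mul_ne_top (ENNReal.natCast_ne_top _)
        (ENNReal.mul_ne_top (ENNReal.mul_ne_top ENNReal.ofNat_ne_top (ENNReal.natCast_ne_top _))
          ENNReal.ofReal_ne_top)
    have := ENNReal.toReal_mono hne hDWbound
    rw [ENNReal.toReal_mul, ENNReal.toReal_mul, ENNReal.toReal_mul] at this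
    simpa [hηdef, ENNReal.toReal_ofReal hδpos.le, mul_assoc] using this
  have hsum3 : ∑ j : W → Fin n,
      |((ω : Measure X) (Bset j)).toReal - ((ω : Measure X) (Aset j)).toReal| ≤ ε / 4 := by
    have hstep : ∑ j : W → Fin n,
        |((ω : Measure X) (Bset j)).toReal - ((ω : Measure X) (Aset j)).toReal| ≤
        (∑ j : W → Fin n, (ω : Measure X) (Aset j \ Bset j)).toReal +
          (∑ j : W → Fin n, (ω : Measure X) (Bset j \ Aset j)).toReal := by
      rw [ENNReal.toReal_sum (fun j _ => measure_ne_top _ _),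
        ENNReal.toReal_sum (fun j _ => measure_ne_top _ _), ← Finset.sum_add_distrib]
      exact Finset.sum_le_sum fun j _ => hthird j
    have hstep2 : (∑ j : W → Fin n, (ω : Measure X) (Aset j \ Bset j)).toReal +
        (∑ j : W → Fin n, (ω : Measure X) (Bset j \ Aset j)).toReal ≤
        2 * ((ω : Measure X) DW).toReal := by
      have a1 := ENNReal.toReal_mono (measure_ne_top _ _) hsumAB
      have a2 := ENNReal.toReal_mono (measure_ne_top _ _) hsumBA
      linarith
    have harith : 2 * ((W.card : ℝ) * (2 * n * δ)) ≤ ε / 4 := by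
      rw [hδ]
      exact arith_third ε hε n W.card
    linarith [hDWreal, hstep, hstep2]
  -- second error term
  have hsum2 : ∑ j : W → Fin n,
      |((ω' : Measure X) (Bset j)).toReal - ((ω : Measure X) (Bset j)).toReal| ≤ ε / 4 := by
    have h1 : ∑ j : W → Fin n,
        |((ω' : Measure X) (Bset j)).toReal - ((ω : Measure X) (Bset j)).toReal| ≤
        ∑ _j : W → Fin n, δ₂ := Finset.sum_le_sum fun j _ => (hω'nb j).le
    rw [Finset.sum_const, Finset.card_univ, nsmul_eq_mul] at h1
    have h2 : (m : ℝ) * δ₂ = ε / 4 := by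
      rw [hδ₂]
      exact arith_second ε m hmpos
    rw [hm] at h2
    linarith
  -- assemble
  refine ⟨φ, hφmeas, ?_⟩
  have hfinal : ∑ j : W → Fin n,
      |(ν {y | ∀ w : W, φ ((w : Γ) • y) = j w}).toReal -
        ((ω : Measure X) (Aset j)).toReal| ≤ ε := by
    have htri : ∀ j : W → Fin n,
        |(ν {y | ∀ w : W, φ ((w : Γ) • y) = j w}).toReal -
          ((ω : Measure X) (Aset j)).toReal| ≤
        |(ν {y | ∀ w : W, φ ((w : Γ) • y) = j w}).toReal -
            ((ω' : Measure X) (Bset j)).toReal| +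
          (|((ω' : Measure X) (Bset j)).toReal - ((ω : Measure X) (Bset j)).toReal| +
            |((ω : Measure X) (Bset j)).toReal - ((ω : Measure X) (Aset j)).toReal|) := by
      intro j
      calc |(ν {y | ∀ w : W, φ ((w : Γ) • y) = j w}).toReal -
          ((ω : Measure X) (Aset j)).toReal| ≤
          |(ν {y | ∀ w : W, φ ((w : Γ) • y) = j w}).toReal -
              ((ω' : Measure X) (Bset j)).toReal| +
            |((ω' : Measure X) (Bset j)).toReal - ((ω : Measure X) (Aset j)).toReal| :=
          abs_sub_le _ _ _
        _ ≤ _ := by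
            refine add_le_add_right ?_ _
            exact abs_sub_le _ _ _
    calc ∑ j : W → Fin n,
        |(ν {y | ∀ w : W, φ ((w : Γ) • y) = j w}).toReal -
          ((ω : Measure X) (Aset j)).toReal| ≤
        ∑ j : W → Fin n,
          (|(ν {y | ∀ w : W, φ ((w : Γ) • y) = j w}).toReal -
              ((ω' : Measure X) (Bset j)).toReal| +
            (|((ω' : Measure X) (Bset j)).toReal - ((ω : Measure X) (Bset j)).toReal| +
              |((ω : Measure X) (Bset j)).toReal - ((ω : Measure X) (Aset j)).toReal|)) :=
          Finset.sum_le_sum fun j _ => htri j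
      _ = (∑ j : W → Fin n,
            |(ν {y | ∀ w : W, φ ((w : Γ) • y) = j w}).toReal -
              ((ω' : Measure X) (Bset j)).toReal|) +
          ((∑ j : W → Fin n,
            |((ω' : Measure X) (Bset j)).toReal - ((ω : Measure X) (Bset j)).toReal|) +
          (∑ j : W → Fin n,
            |((ω : Measure X) (Bset j)).toReal - ((ω : Measure X) (Aset j)).toReal|)) := by
          rw [Finset.sum_add_distrib, Finset.sum_add_distrib]
      _ ≤ ε / 4 + (ε / 4 + ε / 4) := add_le_add hφsum' (add_le_add hsum2 hsum3)
      _ ≤ ε := by linarith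
  exact hfinal
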